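/- For integers k ≥ 0 and l ≤ −2, the double sum ∑_{a=0}^{k−2} ∑_{b=0}^{−l+1} (−1)^{a+l−b} C(2k,a)·C(−l+1,b)·C(k−a−l+b−1, k−2−a)·b(b−1) equals (l^2−l)·(−1)^{k+l}·C(2k+2l−3, k+l−2). -/

import Mathlib

/-- Generalized binomial coefficient: `0` for `k < 0`; usual binomial for `n ≥ 0`
(zero when `k > n`); for `n < 0`: `(-1)^k * C (k - n - 1) k` when `k ≥ 0`,
`(-1)^(n-k) * C (-k - 1) (n - k)` when `k ≤ n`, and `0` otherwise. -/
def C (n k : ℤ) : ℤ :=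
  if 0 ≤ n then (if 0 ≤ k then (n.toNat.choose k.toNat : ℤ) else 0)
  else if 0 ≤ k then (-1) ^ k.toNat * ((k - n - 1).toNat.choose k.toNat : ℤ)
  else if k ≤ n then (-1) ^ (n - k).toNat * ((-k - 1).toNat.choose (n - k).toNat : ℤ)
  else 0



open Finset

lemma lemA (M : ℕ) : ∀ (x r : ℕ),
    ∑ j ∈ range (M+1), (-1:ℤ)^j * (M.choose j) * ((x+j).choose r)
      = (-1)^M * (if M ≤ r then ((x.choose (r-M)) : ℤ) else 0) := by
  induction M with
  | zero => intro x r; simp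
  | succ M ih =>
    intro x r
    have hsplit : ∀ y : ℕ, ∑ j ∈ range M, (-1:ℤ)^j * (M.choose (j+1)) * ((y+1+j).choose r)
        = (y.choose r : ℤ) - ∑ j ∈ range (M+1), (-1:ℤ)^j * (M.choose j) * ((y+j).choose r) := by
      intro y
      rw [Finset.sum_range_succ' (fun j => (-1:ℤ)^j * (M.choose j) * ((y+j).choose r)) M]
      simp only [pow_succ, pow_zero, Nat.choose_zero_right, Nat.cast_one, one_mul, add_zero]
      have : ∀ j, (-1:ℤ)^j * (-1) * (M.choose (j+1)) * ((y+(j+1)).choose r)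
          = -((-1:ℤ)^j * (M.choose (j+1)) * ((y+1+j).choose r)) := by
        intro j; have : y + (j+1) = y + 1 + j := by omega
        rw [this]; ring
      rw [Finset.sum_congr rfl (fun j _ => this j), Finset.sum_neg_distrib]
      ring
    rw [Finset.sum_range_succ' (fun j => (-1:ℤ)^j * ((M+1).choose j) * ((x+j).choose r)) (M+1)]
    have hterm : ∀ j, (-1:ℤ)^(j+1) * ((M+1).choose (j+1)) * ((x+(j+1)).choose r)
        = -((-1:ℤ)^j * (M.choose j) * ((x+1+j).choose r))
          - ((-1:ℤ)^j * (M.choose (j+1)) * ((x+1+j).choose r)) := by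
      intro j
      have h1 : x + (j+1) = x + 1 + j := by omega
      rw [h1, Nat.choose_succ_succ, pow_succ]
      push_cast
      ring
    rw [Finset.sum_congr rfl (fun j _ => hterm j)]
    rw [Finset.sum_sub_distrib, Finset.sum_neg_distrib]
    have hM1 : ∑ j ∈ range (M+1), (-1:ℤ)^j * (M.choose (j+1)) * ((x+1+j).choose r)
        = ∑ j ∈ range M, (-1:ℤ)^j * (M.choose (j+1)) * ((x+1+j).choose r) := by
      rw [Finset.sum_range_succ, Nat.choose_succ_self]; simp
    rw [hM1, hsplit x, ih (x+1) r, ih x r]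
    simp only [pow_succ, pow_zero, Nat.choose_zero_right, Nat.cast_one, one_mul, add_zero]
    by_cases h1 : M + 1 ≤ r
    · rw [if_pos h1, if_pos (by omega), if_pos (by omega)]
      have h2 : r - M = (r - (M+1)) + 1 := by omega
      rw [h2, Nat.choose_succ_succ]
      push_cast; ring
    · by_cases h2 : M ≤ r
      · have h3 : r = M := by omega
        rw [if_neg h1, if_pos h2, if_pos h2, h3]
        simp; ring
      · rw [if_neg h1, if_neg h2, if_neg h2]; ring

open Finset

noncomputable def Vs : PowerSeries ℤ := PowerSeries.mk (fun j => (-1:ℤ)^j)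

lemma one_add_X_mul_Vs : ((1 + PowerSeries.X) * Vs : PowerSeries ℤ) = 1 := by
  ext n
  rw [PowerSeries.coeff_mul]
  cases n with
  | zero => simp [Vs]
  | succ n =>
    rw [Finset.Nat.sum_antidiagonal_eq_sum_range_succ_mk]
    simp only [PowerSeries.coeff_one, Nat.succ_ne_zero, if_false]
    have hterm : ∀ k ∈ range (n+2),
        (PowerSeries.coeff (R := ℤ) (k, n+1-k).1) (1 + PowerSeries.X) * (PowerSeries.coeff (R := ℤ) (k, n+1-k).2) Vs
        = (if k = 0 then (-1:ℤ)^(n+1-k) else 0) + (if k = 1 then (-1:ℤ)^(n+1-k) else 0) := by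
      intro k _
      simp only [map_add, PowerSeries.coeff_one, PowerSeries.coeff_X, Vs, PowerSeries.coeff_mk]
      by_cases h0 : k = 0
      · subst h0; norm_num
      · by_cases h1 : k = 1
        · subst h1; norm_num
        · rw [if_neg h0, if_neg h1, if_neg h0, if_neg h1]; ring
    rw [Finset.sum_congr rfl hterm, Finset.sum_add_distrib,
      Finset.sum_ite_eq' (range (n+2)) 0 (fun k => (-1:ℤ)^(n+1-k)),
      Finset.sum_ite_eq' (range (n+2)) 1 (fun k => (-1:ℤ)^(n+1-k))]
    rw [if_pos (by simp), if_pos (by simp [Finset.mem_range])]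
    have : n + 1 - 0 = (n - 0) + 1 := by omega
    rw [this, pow_succ]
    simp

lemma coeff_one_add_X_pow' (n i : ℕ) :
    (PowerSeries.coeff (R := ℤ) i) ((1 + PowerSeries.X)^n) = n.choose i := by
  have : ((1 + Polynomial.X : Polynomial ℤ) ^ n : Polynomial ℤ).coeff i = n.choose i :=
    Polynomial.coeff_one_add_X_pow ℤ n i
  rw [← this, ← Polynomial.coeff_coe]
  push_cast
  norm_cast

noncomputable def Ss (r : ℕ) : PowerSeries ℤ :=
  PowerSeries.mk (fun j => (-1:ℤ)^j * ((r+j).choose j))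

lemma Ss_eq (r : ℕ) : Ss r = Vs ^ (r+1) := by
  induction r with
  | zero =>
    ext n; simp [Ss, Vs]
  | succ r ih =>
    have hv : Vs ^ (r+1+1) = Vs ^ (r+1) * Vs := by ring
    rw [hv, ← ih]
    ext n
    rw [PowerSeries.coeff_mul, Finset.Nat.sum_antidiagonal_eq_sum_range_succ_mk]
    simp only [Ss, Vs, PowerSeries.coeff_mk]
    have hterm : ∀ k ∈ range (n+1),
        (-1:ℤ)^k * ((r+k).choose k) * (-1)^(n-k) = (-1)^n * ((r+k).choose k) := by
      intro k hk
      rw [Finset.mem_range] at hk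
      have h2 : (-1:ℤ)^k * (-1)^(n-k) = (-1)^n := by
        rw [← pow_add]; congr 1; omega
      calc (-1:ℤ)^k * ((r+k).choose k) * (-1)^(n-k)
          = ((-1:ℤ)^k * (-1)^(n-k)) * ((r+k).choose k) := by ring
        _ = (-1)^n * ((r+k).choose k) := by rw [h2]
    rw [Finset.sum_congr rfl hterm, ← Finset.mul_sum]
    have hhs : ∑ k ∈ range (n+1), (((r+k).choose k : ℤ)) = (((n + r + 1).choose (r+1) : ℕ) : ℤ) := by
      rw [← Nat.sum_range_add_choose n r]
      push_cast
      apply Finset.sum_congr rfl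
      intro i _
      rw [add_comm r i]
      norm_cast
      exact Nat.choose_symm_add
    rw [hhs]
    have hsym : (n + r + 1).choose (r + 1) = (r + 1 + n).choose n := by
      rw [show n + r + 1 = r + 1 + n by omega]
      exact Nat.choose_symm_add
    rw [hsym]

lemma lemB (n r A : ℕ) (h : r + 1 ≤ n) :
    ∑ j ∈ range (A+1), (-1:ℤ)^j * (n.choose (A-j)) * ((r+j).choose j) = ((n-r-1).choose A : ℤ) := by
  have key : ((1 + PowerSeries.X)^n * Ss r : PowerSeries ℤ) = (1 + PowerSeries.X)^(n-r-1) := by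
    have hn : n = (n - r - 1) + (r + 1) := by omega
    rw [show ((1+PowerSeries.X)^n : PowerSeries ℤ) = (1+PowerSeries.X)^(n-r-1) * (1+PowerSeries.X)^(r+1)
      by rw [← pow_add, show n-r-1+(r+1) = n from by omega]]
    rw [mul_assoc, Ss_eq, ← mul_pow, one_add_X_mul_Vs, one_pow, mul_one]
  have hc := congrArg (PowerSeries.coeff (R := ℤ) A) key
  rw [PowerSeries.coeff_mul, Finset.Nat.sum_antidiagonal_eq_sum_range_succ_mk,
    coeff_one_add_X_pow'] at hc
  simp only [coeff_one_add_X_pow', Ss, PowerSeries.coeff_mk] at hc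
  rw [← hc,
    ← Finset.sum_range_reflect (fun x => (n.choose x : ℤ) * ((-1) ^ (A - x) * ((r + (A - x)).choose (A - x) : ℤ))) (A+1)]
  apply Finset.sum_congr rfl
  intro j hj
  rw [Finset.mem_range] at hj

  rw [show A + 1 - 1 - j = A - j by omega, show A - (A - j) = j by omega]
  ring

lemma chooseprod (m c : ℕ) (hm : 1 ≤ m) :
    (c+2)*(c+1)*((m+1).choose (c+2)) = (m+1)*(m*((m-1).choose c)) := by
  obtain ⟨m', rfl⟩ : ∃ m', m = m' + 1 := ⟨m - 1, by omega⟩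
  have h1 : (m'+1+1) * (m'+1).choose (c+1) = (m'+1+1).choose (c+2) * (c+2) :=
    Nat.add_one_mul_choose_eq (m'+1) (c+1)
  have h2 : (m'+1) * m'.choose c = (m'+1).choose (c+1) * (c+1) :=
    Nat.add_one_mul_choose_eq m' c
  simp only [show m'+1+1-1 = m'+1 from rfl, Nat.add_sub_cancel]
  calc (c+2)*(c+1)*((m'+1+1).choose (c+2)) = (c+1) * ((m'+1+1).choose (c+2) * (c+2)) := by ring
    _ = (c+1) * ((m'+1+1) * (m'+1).choose (c+1)) := by rw [h1]
    _ = (m'+1+1) * ((m'+1).choose (c+1) * (c+1)) := by ring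
    _ = (m'+1+1) * ((m'+1) * m'.choose c) := by rw [h2]

lemma inner (m r : ℕ) (hm : 1 ≤ m) :
    ∑ b ∈ range (m+2), (-1:ℤ)^b * ((m+1).choose b) * ((r+m+1+b).choose r) * ((b:ℤ)*((b:ℤ)-1))
      = -((m:ℤ)*(m+1)) * ((-1:ℤ)^m *
          (if m-1 ≤ r then (((r+m+3).choose (r-(m-1))) : ℤ) else 0)) := by
  rw [Finset.sum_range_succ' (fun b => (-1:ℤ)^b * ((m+1).choose b) * ((r+m+1+b).choose r) * ((b:ℤ)*((b:ℤ)-1))) (m+1)]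
  push_cast
  rw [Finset.sum_range_succ' (fun b => (-1:ℤ)^(b+1) * ((m+1).choose (b+1)) * ((r+m+1+(b+1)).choose r) * (((b:ℤ)+1)*((b:ℤ)+1-1))) m]
  have hterm : ∀ c ∈ range m,
      (-1:ℤ)^(c+1+1) * ((m+1).choose (c+1+1)) * ((r+m+1+(c+1+1)).choose r) * ((((c+1:ℕ):ℤ)+1)*(((c+1:ℕ):ℤ)+1-1))
      = ((m:ℤ)*((m:ℤ)+1)) * ((-1:ℤ)^c * (((m-1).choose c) : ℤ) * (((r+m+3+c).choose r) : ℤ)) := by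
    intro c _
    have hc := congrArg (Nat.cast : ℕ → ℤ) (chooseprod m c hm)
    push_cast at hc
    rw [show c+1+1 = c+2 from by omega, show r+m+1+(c+2) = r+m+3+c from by omega]
    push_cast
    linear_combination ((-1:ℤ)^c * (((r+m+3+c).choose r) : ℤ)) * hc
  rw [Finset.sum_congr rfl hterm, ← Finset.mul_sum]
  have hsum : ∑ c ∈ range m, (-1:ℤ)^c * (((m-1).choose c) : ℤ) * (((r+m+3+c).choose r) : ℤ)
      = (-1)^(m-1) * (if m-1 ≤ r then (((r+m+3).choose (r-(m-1))) : ℤ) else 0) := by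
    have h := lemA (m-1) (r+m+3) r
    rw [show m-1+1 = m from by omega] at h
    exact h
  rw [hsum]
  have hs : (-1:ℤ)^(m-1) = -(-1:ℤ)^m := by
    obtain ⟨m', rfl⟩ : ∃ m', m = m' + 1 := ⟨m - 1, by omega⟩
    simp [pow_succ]
  rw [hs]
  ring

lemma outer (k m : ℕ) (hm : 2 ≤ m) :
    ∑ a ∈ range (k-1), (-1:ℤ)^a * ((2*k).choose a) *
        (if m-1 ≤ k-2-a then (((k-2-a)+m+3).choose ((k-2-a)-(m-1)) : ℤ) else 0)
      = if m+1 ≤ k then (-1:ℤ)^(k-m-1) * ((2*k-(2*m+3)).choose (k-m-1) : ℤ) else 0 := by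
  by_cases hk : m+1 ≤ k
  · rw [if_pos hk]
    set A := k - m - 1 with hA
    have hsub : range (A+1) ⊆ range (k-1) := by
      intro x hx; rw [Finset.mem_range] at *; omega
    rw [← Finset.sum_subset hsub (by
      intro a ha hna
      rw [Finset.mem_range] at ha; rw [Finset.mem_range] at hna
      rw [if_neg (by omega), mul_zero])]
    have hterm : ∀ a ∈ range (A+1),
        (-1:ℤ)^a * ((2*k).choose a) *
          (if m-1 ≤ k-2-a then (((k-2-a)+m+3).choose ((k-2-a)-(m-1)) : ℤ) else 0)
        = (-1:ℤ)^a * ((2*k).choose a) * (((k+m+1-a).choose (k-m-1-a)) : ℤ) := by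
      intro a ha
      rw [Finset.mem_range] at ha
      rw [if_pos (by omega), show (k-2-a)+m+3 = k+m+1-a from by omega,
        show (k-2-a)-(m-1) = k-m-1-a from by omega]
    rw [Finset.sum_congr rfl hterm]
    rw [← Finset.sum_range_reflect (fun a => (-1:ℤ)^a * ((2*k).choose a) * (((k+m+1-a).choose (k-m-1-a)) : ℤ)) (A+1)]
    have hterm2 : ∀ j ∈ range (A+1),
        (-1:ℤ)^(A+1-1-j) * ((2*k).choose (A+1-1-j)) * (((k+m+1-(A+1-1-j)).choose (k-m-1-(A+1-1-j))) : ℤ)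
        = (-1:ℤ)^A * ((-1:ℤ)^j * ((2*k).choose (A-j)) * (((2*m+2+j).choose j) : ℤ)) := by
      intro j hj
      rw [Finset.mem_range] at hj
      rw [show A+1-1-j = A-j from by omega, show k+m+1-(A-j) = 2*m+2+j from by omega,
        show k-m-1-(A-j) = j from by omega]
      have hsg : (-1:ℤ)^(A-j) = (-1)^A * (-1)^j := by
        have : (-1:ℤ)^(A-j) * (-1)^j = (-1)^A := by rw [← pow_add]; congr 1; omega
        have hj2 : ((-1:ℤ)^j)*((-1:ℤ)^j) = 1 := by
          rw [← pow_add, show j+j = 2*j from by omega, pow_mul]; norm_num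
        calc (-1:ℤ)^(A-j) = (-1:ℤ)^(A-j) * (((-1:ℤ)^j)*((-1:ℤ)^j)) := by rw [hj2, mul_one]
          _ = ((-1:ℤ)^(A-j) * (-1)^j) * (-1)^j := by ring
          _ = (-1)^A * (-1)^j := by rw [this]
      rw [hsg]; ring
    rw [Finset.sum_congr rfl hterm2, ← Finset.mul_sum]
    by_cases hk2 : m + 2 ≤ k
    · rw [lemB (2*k) (2*m+2) A (by omega), show 2*k-(2*m+2)-1 = 2*k-(2*m+3) from by omega]
    · have hA0 : A = 0 := by omega
      rw [hA0]
      simp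
  · rw [if_neg hk]
    apply Finset.sum_eq_zero
    intro a ha
    rw [Finset.mem_range] at ha
    rw [if_neg (by omega), mul_zero]

lemma main_int (k m : ℕ) (hm : 2 ≤ m) :
    ∑ a ∈ Finset.range (k - 1), ∑ b ∈ Finset.range (m + 2),
        (-1:ℤ)^(a+m+b) * ((2*k).choose a) * ((m+1).choose b)
          * (((k-2-a)+m+1+b).choose (k-2-a)) * ((b:ℤ)*((b:ℤ)-1))
      = -((m:ℤ)*(m+1)) *
          (if m+1 ≤ k then (-1:ℤ)^(k-m-1) * ((2*k-(2*m+3)).choose (k-m-1) : ℤ) else 0) := by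
  have hrow : ∀ a ∈ range (k-1),
      ∑ b ∈ Finset.range (m + 2),
        (-1:ℤ)^(a+m+b) * ((2*k).choose a) * ((m+1).choose b)
          * (((k-2-a)+m+1+b).choose (k-2-a)) * ((b:ℤ)*((b:ℤ)-1))
      = -((m:ℤ)*(m+1)) * ((-1:ℤ)^a * ((2*k).choose a) *
          (if m-1 ≤ (k-2-a) then ((((k-2-a)+m+3).choose ((k-2-a)-(m-1))) : ℤ) else 0)) := by
    intro a _
    have hsplit : ∀ b ∈ range (m+2),
        (-1:ℤ)^(a+m+b) * ((2*k).choose a) * ((m+1).choose b)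
          * (((k-2-a)+m+1+b).choose (k-2-a)) * ((b:ℤ)*((b:ℤ)-1))
        = ((-1:ℤ)^(a+m) * ((2*k).choose a)) *
            ((-1:ℤ)^b * ((m+1).choose b) * (((k-2-a)+m+1+b).choose (k-2-a)) * ((b:ℤ)*((b:ℤ)-1))) := by
      intro b _
      rw [pow_add]
      ring
    rw [Finset.sum_congr rfl hsplit, ← Finset.mul_sum, inner m (k-2-a) (by omega)]
    have hsgn : (-1:ℤ)^(a+m) * (-1:ℤ)^m = (-1)^a := by
      rw [← pow_add, show a+m+m = a+2*m from by omega, pow_add, pow_mul]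
      norm_num
    linear_combination (-((m:ℤ)*((m:ℤ)+1)) * (((2*k).choose a : ℕ) : ℤ) *
      (if m-1 ≤ (k-2-a) then ((((k-2-a)+m+3).choose ((k-2-a)-(m-1))) : ℤ) else 0)) * hsgn
  rw [Finset.sum_congr rfl hrow, ← Finset.mul_sum, outer k m hm]

lemma zpow_helper (n : ℕ) (t : ℤ) : (-1:ℚ)^((n:ℤ) - 2*t) = (-1:ℚ)^n := by
  rw [zpow_sub₀ (by norm_num), zpow_natCast, zpow_mul]
  norm_num

lemma C_nonneg (n k : ℤ) (hn : 0 ≤ n) (hk : 0 ≤ k) : C n k = (n.toNat.choose k.toNat : ℤ) := by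
  simp [C, hn, hk]

lemma C_neg_neg (n k : ℤ) (hn : n < 0) (hk : k ≤ n) :
    C n k = (-1) ^ (n - k).toNat * ((-k - 1).toNat.choose (n - k).toNat : ℤ) := by
  simp [C, not_le.mpr hn, not_le.mpr (show k < 0 by omega), hk]

lemma C_zero' (n k : ℤ) (hn : n < 0) (hk : k < 0) (h : ¬ (k ≤ n)) : C n k = 0 := by
  simp [C, not_le.mpr hn, not_le.mpr hk, h]

/-- For `k ≥ 0`, `l ≤ −2`:
`∑_{a=0}^{k−2} ∑_{b=0}^{−l+1} (−1)^{a+l−b} C(2k,a) C(−l+1,b) C(k−a−l+b−1, k−2−a) b(b−1)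
  = (l^2−l)(−1)^{k+l} C(2k+2l−3, k+l−2)`. -/
theorem stmt5 (k : ℕ) (l : ℤ) (hl : l ≤ -2) :
    ∑ a ∈ Finset.range (k - 1), ∑ b ∈ Finset.range (-l + 2).toNat,
        (-1 : ℚ) ^ ((a : ℤ) + l - b) *
          (C (2 * k) a * C (-l + 1) b * C ((k : ℤ) - a - l + b - 1) ((k : ℤ) - 2 - a) : ℤ) *
          ((b : ℚ) * ((b : ℚ) - 1)) =
      ((l : ℚ) ^ 2 - l) * (-1 : ℚ) ^ ((k : ℤ) + l) *
        (C (2 * k + 2 * l - 3) ((k : ℤ) + l - 2) : ℤ) := by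
  obtain ⟨m, hm, rfl⟩ : ∃ m : ℕ, 2 ≤ m ∧ l = -(m:ℤ) := ⟨(-l).toNat, by omega, by omega⟩
  rw [show (-(-(m:ℤ)) + 2).toNat = m + 2 from by omega]
  have hL : ∑ a ∈ Finset.range (k - 1), ∑ b ∈ Finset.range (m + 2),
        (-1 : ℚ) ^ ((a : ℤ) + -(m:ℤ) - b) *
          (C (2 * k) a * C (-(-(m:ℤ)) + 1) b * C ((k : ℤ) - a - (-(m:ℤ)) + b - 1) ((k : ℤ) - 2 - a) : ℤ) *
          ((b : ℚ) * ((b : ℚ) - 1))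
      = ((∑ a ∈ Finset.range (k - 1), ∑ b ∈ Finset.range (m + 2),
          (-1:ℤ)^(a+m+b) * ((2*k).choose a) * ((m+1).choose b)
            * (((k-2-a)+m+1+b).choose (k-2-a)) * ((b:ℤ)*((b:ℤ)-1)) : ℤ) : ℚ) := by
    push_cast
    apply Finset.sum_congr rfl
    intro a ha
    apply Finset.sum_congr rfl
    intro b hb
    rw [Finset.mem_range] at ha hb
    have hC1 : C (2 * (k:ℤ)) (a:ℤ) = (((2*k).choose a : ℕ) : ℤ) := by
      rw [C_nonneg _ _ (by omega) (by omega), show ((2*(k:ℤ)).toNat) = 2*k from by omega,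
        show ((a:ℤ)).toNat = a from by omega]
    have hC2 : C (-(-(m:ℤ)) + 1) (b:ℤ) = (((m+1).choose b : ℕ) : ℤ) := by
      rw [C_nonneg _ _ (by omega) (by omega), show ((-(-(m:ℤ)) + 1).toNat) = m+1 from by omega,
        show ((b:ℤ)).toNat = b from by omega]
    have hC3 : C ((k : ℤ) - a - (-(m:ℤ)) + b - 1) ((k : ℤ) - 2 - a)
        = ((((k-2-a)+m+1+b).choose (k-2-a) : ℕ) : ℤ) := by
      rw [C_nonneg _ _ (by omega) (by omega),
        show (((k : ℤ) - a - (-(m:ℤ)) + b - 1).toNat) = (k-2-a)+m+1+b from by omega,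
        show (((k : ℤ) - 2 - a).toNat) = k-2-a from by omega]
    rw [hC1, hC2, hC3,
      show (a:ℤ) + -(m:ℤ) - (b:ℤ) = ((a+m+b : ℕ) : ℤ) - 2*((m:ℤ)+(b:ℤ)) from by push_cast; ring,
      zpow_helper]
    push_cast
    ring
  rw [hL, main_int k m hm,
    show (-1 : ℚ) ^ ((k:ℤ) + -(m:ℤ)) = (-1:ℚ)^(k+m : ℕ) from by
      rw [show (k:ℤ) + -(m:ℤ) = ((k+m : ℕ) : ℤ) - 2*(m:ℤ) from by push_cast; ring, zpow_helper]]
  by_cases hk1 : k ≤ m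
  · rw [if_neg (by omega), C_zero' _ _ (by omega) (by omega) (by omega)]
    push_cast
    ring
  · by_cases hk2 : k = m + 1
    · subst hk2
      rw [if_pos (by omega), C_neg_neg _ _ (by omega) (by omega),
        show ((2*((m+1:ℕ):ℤ) + 2*(-(m:ℤ)) - 3) - (((m+1:ℕ):ℤ) + -(m:ℤ) - 2)).toNat = 0 from by omega,
        show ((-(((m+1:ℕ):ℤ) + -(m:ℤ) - 2)) - 1).toNat = 0 from by omega,
        show (m+1) - m - 1 = 0 from by omega,
        show 2*(m+1) - (2*m+3) = 0 from by omega,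
        show ((m+1) + m) = 2*m+1 from by omega]
      have h5 : (-1:ℚ)^(2*m+1) = -1 := by
        rw [pow_succ, pow_mul]; norm_num
      rw [h5]
      push_cast
      ring
    · have hk3 : m + 2 ≤ k := by omega
      rw [if_pos (by omega), C_nonneg _ _ (by omega) (by omega),
        show ((2*(k:ℤ) + 2*(-(m:ℤ)) - 3)).toNat = 2*k - (2*m+3) from by omega,
        show (((k:ℤ) + -(m:ℤ) - 2)).toNat = k - (m+2) from by omega,
        show (2*k - (2*m+3)).choose (k-m-1) = (2*k - (2*m+3)).choose (k-(m+2)) from by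
          rw [show k-m-1 = (2*k-(2*m+3)) - (k-(m+2)) from by omega]
          exact Nat.choose_symm (by omega),
        show (-1:ℚ)^(k+m) = -(-1:ℚ)^(k-m-1) from by
          rw [show k+m = (k-m-1) + 1 + 2*m from by omega, pow_add, pow_add, pow_mul]
          norm_num]
      push_cast
      ring
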